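/- Let $x \geq 2$ and let $a$ be a function supported on positive integers that are products of exactly $k$ elements from a finite set $\mathcal{Q}$ of primes and prime squares, given by $a(m) = \sum_{q_1, \ldots, q_k \in \mathcal{Q} : \prod q_i = m} \prod_i a(q_i)$ for complex weights $(a(q))_{q \in \mathcal{Q}}$. Then $\sum_m \frac{\tilde{d}(m)|a(m)|^2}{m} \leq (k!) \big(2\sum_{q \in \mathcal{Q}} \frac{v_q |a(q)|^2}{q}\big)^k$, where $\tilde{d}(m) = \sum_{d | m} \mathbf{1}_{p | d \Rightarrow p \in \mathcal{P}}$ for the set $\mathcal{P}$ of primes underlying $\mathcal{Q}$, and $v_q = 1$ if $q$ is prime, $v_q = 6$ if $q$ is a prime square. -/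

import Mathlib

open Finset


private def Om (n : ℕ) : ℕ := n.factorization.sum fun _ e => e

private lemma Om_mul {a b : ℕ} (ha : a ≠ 0) (hb : b ≠ 0) : Om (a * b) = Om a + Om b := by
  unfold Om
  rw [Nat.factorization_mul ha hb]
  exact Finsupp.sum_add_index' (fun _ => rfl) (fun _ _ _ => rfl)

private lemma Om_pow {p : ℕ} (hp : p.Prime) (e : ℕ) : Om (p ^ e) = e := by
  unfold Om
  rw [hp.factorization_pow]
  exact Finsupp.sum_single_index rfl

private lemma Om_prime {p : ℕ} (hp : p.Prime) : Om p = 1 := by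
  simpa using Om_pow hp 1

private lemma Om_one : Om 1 = 0 := by
  unfold Om
  simp

private lemma tau_le_two_pow {m : ℕ} (hm : m ≠ 0) : m.divisors.card ≤ 2 ^ Om m := by
  rw [Nat.card_divisors hm]
  unfold Om
  rw [Finsupp.sum, ← Finset.prod_pow_eq_pow_sum]
  have : m.primeFactors = m.factorization.support := rfl
  rw [this]
  apply Finset.prod_le_prod'
  intro i _
  exact Nat.succ_le_of_lt Nat.lt_two_pow_self

private lemma Om_prod {ι : Type*} (s : Finset ι) (f : ι → ℕ) (hf : ∀ i ∈ s, f i ≠ 0) :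
    Om (∏ i ∈ s, f i) = ∑ i ∈ s, Om (f i) := by
  classical
  induction s using Finset.cons_induction with
  | empty => simp [Om]
  | cons a s ha ih =>
    rw [Finset.prod_cons, Finset.sum_cons,
      Om_mul (hf a (Finset.mem_cons_self a s)) (Finset.prod_ne_zero_iff.2 fun i hi => hf i (Finset.mem_cons_of_mem hi)),
      ih (fun i hi => hf i (Finset.mem_cons_of_mem hi))]


private lemma two_pow_le_fac (j : ℕ) : 2 ^ j ≤ (j + 1).factorial := by
  induction j with
  | zero => simp
  | succ n ih =>
    rw [pow_succ, Nat.factorial_succ]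
    calc 2 ^ n * 2 ≤ (n + 1).factorial * 2 := Nat.mul_le_mul_right 2 ih
    _ ≤ (n + 1 + 1) * (n + 1).factorial := by nlinarith [Nat.factorial_pos (n+1)]

private lemma geom_six (n : ℕ) : ∑ j ∈ range n, ((1:ℝ)/6) ^ j ≤ 6/5 := by
  rw [geom_sum_eq (by norm_num : (1/6:ℝ) ≠ 1) n]
  have h0 : (0:ℝ) ≤ (1/6:ℝ) ^ n := by positivity
  rw [div_le_iff_of_neg (by norm_num : (1/6:ℝ) - 1 < 0)]
  linarith

private noncomputable def uu (e j : ℕ) : ℝ :=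
  (if e < j then 0 else (j.choose (e - j) : ℝ)) * 3 ^ j / j.factorial

private lemma uu_nonneg (e j : ℕ) : 0 ≤ uu e j := by
  unfold uu
  split <;> positivity

private lemma uu_zero {e j : ℕ} (h : e < j) : uu e j = 0 := by
  unfold uu
  rw [if_pos h]
  simp

private lemma uu_lt_bound {e j : ℕ} (hj : j < e) : uu e j ≤ 3 ^ (e-1) * ((1:ℝ)/6) ^ (e-1-j) := by
  unfold uu
  rw [if_neg (by omega)]
  set b := e - j with hb
  have hb1 : 1 ≤ b := by omega
  set i := e - 1 - j with hidef
  have hi : b = i + 1 := by omega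
  have hji : j + i = e - 1 := by omega
  by_cases hbj : b ≤ j
  · have hkey : (j.choose b : ℝ) * b.factorial * (j - b).factorial = j.factorial := by
      exact_mod_cast Nat.choose_mul_factorial_mul_factorial hbj
    have h1f : (1:ℝ) ≤ ((j-b).factorial : ℝ) := by exact_mod_cast Nat.factorial_pos (j-b)
    have hcb : (j.choose b : ℝ) * b.factorial ≤ j.factorial := by
      calc (j.choose b : ℝ) * b.factorial = (j.choose b : ℝ) * b.factorial * 1 := by ring
      _ ≤ (j.choose b : ℝ) * b.factorial * (j-b).factorial := by
          apply mul_le_mul_of_nonneg_left h1f (by positivity)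
      _ = j.factorial := hkey
    have h1 : (j.choose b : ℝ) * 3 ^ j / j.factorial ≤ 3 ^ j / b.factorial := by
      rw [div_le_div_iff₀ (by positivity) (by positivity)]
      calc (j.choose b : ℝ) * 3 ^ j * b.factorial = 3 ^ j * ((j.choose b : ℝ) * b.factorial) := by
            ring
      _ ≤ 3 ^ j * (j.factorial : ℝ) :=
          mul_le_mul_of_nonneg_left hcb (by positivity)
    refine h1.trans ?_
    rw [hi, div_le_iff₀ (by positivity : (0:ℝ) < ((i+1).factorial : ℝ))]
    have h2 : ((2:ℝ)) ^ i ≤ ((i+1).factorial : ℝ) := by exact_mod_cast two_pow_le_fac i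
    have h3 : (3:ℝ) ^ (e-1) = 3 ^ j * 3 ^ i := by rw [← pow_add, hji]
    have key : (3:ℝ) ^ (e-1) * (1/6:ℝ) ^ i * 2 ^ i = 3 ^ j := by
      have hone : (3:ℝ)^i * (1/6)^i * 2^i = 1 := by
        rw [← mul_pow, ← mul_pow]; norm_num
      calc (3:ℝ) ^ (e-1) * (1/6:ℝ) ^ i * 2 ^ i = 3^j * (3^i * (1/6)^i * 2^i) := by rw [h3]; ring
      _ = 3 ^ j := by rw [hone, mul_one]
    calc (3:ℝ) ^ j = 3 ^ (e-1) * (1/6:ℝ) ^ i * 2 ^ i := key.symm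
    _ ≤ 3 ^ (e-1) * (1/6:ℝ) ^ i * ((i+1).factorial : ℝ) :=
        mul_le_mul_of_nonneg_left h2 (by positivity)
  · rw [Nat.choose_eq_zero_of_lt (by omega)]
    simp

private lemma uu_sum (e : ℕ) (he : 1 ≤ e) (n : ℕ) : ∑ j ∈ range n, uu e j ≤ 3 ^ e := by
  have hsub : ∑ j ∈ range n, uu e j ≤ ∑ j ∈ range (n + (e+1)), uu e j :=
    Finset.sum_le_sum_of_subset_of_nonneg (by apply Finset.range_subset_range.2; omega)
      (fun j _ _ => uu_nonneg e j)
  have heq : ∑ j ∈ range (n + (e+1)), uu e j = ∑ j ∈ range (e+1), uu e j := by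
    refine (Finset.sum_subset (Finset.range_subset_range.2 (by omega)) ?_).symm
    intro j _ hj
    rw [Finset.mem_range] at hj
    exact uu_zero (by omega)
  refine hsub.trans (heq.le.trans ?_)
  rw [Finset.sum_range_succ]
  have hue : uu e e = 3 ^ e / e.factorial := by
    unfold uu
    rw [if_neg (lt_irrefl e), Nat.sub_self, Nat.choose_zero_right]
    norm_num
  rcases eq_or_lt_of_le he with he1 | he2
  · -- e = 1
    rw [← he1]
    rw [← he1] at hue
    rw [hue]
    have : ∑ j ∈ range 1, uu 1 j = 0 := by
      rw [Finset.sum_range_one]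
      unfold uu
      norm_num
    rw [this]
    norm_num
  · -- 2 ≤ e
    have hb1 : ∑ j ∈ range e, uu e j ≤ 3 ^ (e-1) * (6/5 : ℝ) := by
      calc ∑ j ∈ range e, uu e j ≤ ∑ j ∈ range e, 3 ^ (e-1) * ((1:ℝ)/6) ^ (e-1-j) :=
            Finset.sum_le_sum (fun j hj => uu_lt_bound (Finset.mem_range.1 hj))
      _ = 3 ^ (e-1) * ∑ j ∈ range e, ((1:ℝ)/6) ^ (e-1-j) := by rw [Finset.mul_sum]
      _ = 3 ^ (e-1) * ∑ j ∈ range e, ((1:ℝ)/6) ^ j := by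
            rw [Finset.sum_range_reflect (fun j => ((1:ℝ)/6) ^ j) e]
      _ ≤ 3 ^ (e-1) * (6/5 : ℝ) := by
            apply mul_le_mul_of_nonneg_left (geom_six e) (by positivity)
    have hue2 : uu e e ≤ 3 ^ e / 2 := by
      rw [hue]
      apply div_le_div_of_nonneg_left (by positivity) (by norm_num)
      exact_mod_cast Nat.factorial_le he2
    have h3e : (3:ℝ) ^ e = 3 * 3 ^ (e-1) := by
      rw [← pow_succ']
      congr 1
      omega
    have hpos : (0:ℝ) < 3 ^ (e-1) := by positivity
    rw [h3e]
    rw [h3e] at hue2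
    linarith

private lemma numeric (s e : ℕ) (he : 1 ≤ e) :
    (∑ j ∈ range (s+1),
        s.choose j * ((if e < j then 0 else j.choose (e-j)) * ((s-j).factorial * 3^j)))
      ≤ s.factorial * 3 ^ e := by
  have key : ((∑ j ∈ range (s+1),
      s.choose j * ((if e < j then 0 else j.choose (e-j)) * ((s-j).factorial * 3^j)) : ℕ) : ℝ)
      ≤ ((s.factorial * 3 ^ e : ℕ) : ℝ) := by
    push_cast
    have hterm : ∀ j ∈ range (s+1),
        (s.choose j : ℝ) * ((if e < j then (0:ℝ) else (j.choose (e-j) : ℝ)) *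
          ((s-j).factorial * 3^j)) = (s.factorial : ℝ) * uu e j := by
      intro j hj
      have hjs : j ≤ s := by rw [Finset.mem_range] at hj; omega
      have hc : (s.choose j : ℝ) * j.factorial * (s-j).factorial = s.factorial := by
        exact_mod_cast Nat.choose_mul_factorial_mul_factorial hjs
      have hjfac : (j.factorial : ℝ) ≠ 0 := by exact_mod_cast (Nat.factorial_pos j).ne'
      by_cases hif : e < j
      · rw [if_pos hif, uu_zero hif]
        simp
      · rw [if_neg hif]
        unfold uu
        rw [if_neg hif]
        field_simp
        linear_combination (j.choose (e-j) : ℝ) * hc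
    rw [Finset.sum_congr rfl hterm, ← Finset.mul_sum]
    calc (s.factorial : ℝ) * ∑ j ∈ range (s+1), uu e j
        ≤ (s.factorial : ℝ) * 3 ^ e :=
          mul_le_mul_of_nonneg_left (uu_sum e he (s+1)) (by positivity)
    _ = _ := by push_cast; ring
  exact_mod_cast key

private def GsD (pp ee : ℕ) {ι : Type} [Fintype ι] [DecidableEq ι] (T : Finset ι) :
    Finset (ι → ℕ) :=
  (Fintype.piFinset (fun i => if i ∈ T then ({pp, pp^2} : Finset ℕ) else {1})).filter
    (fun g => ∏ i, g i = pp ^ ee)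

private def HsD (QS : Finset ℕ) (mm : ℕ) {ι : Type} [Fintype ι] [DecidableEq ι]
    (W : Finset ι) : Finset (ι → ℕ) :=
  (Fintype.piFinset (fun i => if i ∈ W then QS else {1})).filter (fun h => ∏ i, h i = mm)

private lemma key_count (QS : Finset ℕ)
    (hQS : ∀ q ∈ QS, q.Prime ∨ ∃ p, p.Prime ∧ q = p ^ 2)
    {ι : Type} [Fintype ι] [DecidableEq ι] :
    ∀ m : ℕ, m ≠ 0 → ∀ S : Finset ι,
      ((Fintype.piFinset (fun i : ι => if i ∈ S then QS else {1})).filter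
        (fun r => ∏ i, r i = m)).card * 3 ^ S.card
        ≤ S.card.factorial * 3 ^ Om m := by
  have hQ2 : ∀ q ∈ QS, 2 ≤ q := by
    intro q hq
    rcases hQS q hq with hq' | ⟨p, hp, rfl⟩
    · exact hq'.two_le
    · nlinarith [hp.two_le]
  intro m
  induction m using Nat.strong_induction_on with
  | _ m IH =>
  intro hm S
  by_cases hm1 : m = 1
  · subst hm1
    rcases S.eq_empty_or_nonempty with rfl | ⟨i0, hi0⟩
    · have h1 : ((Fintype.piFinset (fun i : ι => if i ∈ (∅ : Finset ι) then QS else {1})).filter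
          (fun r => ∏ i, r i = 1)).card ≤ 1 := by
        refine le_trans (Finset.card_filter_le _ _) ?_
        rw [Fintype.card_piFinset]
        simp
      simpa [Om_one] using h1
    · have h0 : ((Fintype.piFinset (fun i : ι => if i ∈ S then QS else {1})).filter
          (fun r => ∏ i, r i = 1)) = ∅ := by
        apply Finset.eq_empty_of_forall_notMem
        intro r hr
        rw [Finset.mem_filter] at hr
        obtain ⟨hpi, hprod⟩ := hr
        have hr0 : r i0 ∈ QS := by
          have := Fintype.mem_piFinset.1 hpi i0
          rwa [if_pos hi0] at this
        have hdvd : r i0 ∣ 1 := hprod ▸ Finset.dvd_prod_of_mem r (Finset.mem_univ i0)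
        have h1 := Nat.dvd_one.1 hdvd
        have := hQ2 _ hr0
        omega
      rw [h0]
      simp
  -- main case : m ≥ 2
  · set p := m.minFac with hpdef
    have hp : p.Prime := Nat.minFac_prime hm1
    have hpd : p ∣ m := Nat.minFac_dvd m
    set e := m.factorization p with hedef
    have he1 : 1 ≤ e := hp.factorization_pos_of_dvd hm hpd
    set m' := m / p ^ e with hm'def
    have hm'pos : 0 < m' := Nat.ordCompl_pos p hm
    have hmm' : p ^ e * m' = m := Nat.ordProj_mul_ordCompl_eq_self m p
    have hm'lt : m' < m :=
      Nat.div_lt_self (Nat.pos_of_ne_zero hm) (Nat.one_lt_pow (by omega) hp.one_lt)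
    have hOm : Om m = e + Om m' := by
      rw [← hmm', Om_mul (pow_ne_zero e hp.pos.ne') hm'pos.ne', Om_pow hp]
    have hpndm' : ¬ p ∣ m' := Nat.not_dvd_ordCompl hp hm
    -- Step A
    have stepA : ((Fintype.piFinset (fun i : ι => if i ∈ S then QS else {1})).filter
        (fun r => ∏ i, r i = m)).card ≤ ∑ T ∈ S.powerset, (GsD p e T).card * (HsD QS m' (S \ T)).card := by
      have htarget : (S.powerset.sigma (fun T => (GsD p e T) ×ˢ (HsD QS m' (S \ T)))).card
          = ∑ T ∈ S.powerset, (GsD p e T).card * (HsD QS m' (S \ T)).card := by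
        rw [Finset.card_sigma]
        exact Finset.sum_congr rfl fun T _ => Finset.card_product _ _
      rw [← htarget]
      apply Finset.card_le_card_of_injOn
        (fun r => ⟨S.filter (fun i => p ∣ r i),
          ((fun i => if p ∣ r i then r i else 1), (fun i => if p ∣ r i then 1 else r i))⟩)
      · -- maps to
        intro r hr
        rw [Finset.mem_coe, Finset.mem_filter] at hr
        obtain ⟨hpi, hprod⟩ := hr
        have hrpi := Fintype.mem_piFinset.1 hpi
        have hr1 : ∀ i, i ∉ S → r i = 1 := by
          intro i hi
          have := hrpi i
          rw [if_neg hi] at this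
          simpa using this
        have hrQ : ∀ i, i ∈ S → r i ∈ QS := by
          intro i hi
          have := hrpi i
          rwa [if_pos hi] at this
        have hdS : ∀ i, p ∣ r i → i ∈ S := by
          intro i hdi
          by_contra hiS
          rw [hr1 i hiS] at hdi
          have h1 := Nat.dvd_one.1 hdi
          have h2 := hp.two_le
          omega
        have hform : ∀ i, p ∣ r i → r i = p ∨ r i = p^2 := by
          intro i hdi
          rcases hQS _ (hrQ i (hdS i hdi)) with hq | ⟨q, hq, hqe⟩
          · left
            exact ((Nat.prime_dvd_prime_iff_eq hp hq).1 hdi).symm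
          · right
            rw [hqe] at hdi ⊢
            have h1 : p ∣ q := hp.dvd_of_dvd_pow hdi
            rw [(Nat.prime_dvd_prime_iff_eq hp hq).1 h1]
        have hsplit : ∀ i, r i = (if p ∣ r i then r i else 1) * (if p ∣ r i then 1 else r i) := by
          intro i
          by_cases hd : p ∣ r i <;> simp [hd]
        have hm_eq : (∏ i, (if p ∣ r i then r i else 1)) * (∏ i, (if p ∣ r i then 1 else r i)) = m := by
          rw [← Finset.prod_mul_distrib, ← hprod]
          exact Finset.prod_congr rfl fun i _ => (hsplit i).symm
        have hgpow : ∃ c, (∏ i, (if p ∣ r i then r i else 1)) = p ^ c := by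
          apply Finset.prod_induction _ (fun n => ∃ c, n = p ^ c)
          · rintro a b ⟨c1, rfl⟩ ⟨c2, rfl⟩
            exact ⟨c1 + c2, (pow_add p c1 c2).symm⟩
          · exact ⟨0, rfl⟩
          · intro i _
            by_cases hd : p ∣ r i
            · rw [if_pos hd]
              rcases hform i hd with h | h
              · exact ⟨1, by rw [h, pow_one]⟩
              · exact ⟨2, h⟩
            · exact ⟨0, by rw [if_neg hd, pow_zero]⟩
        have hHnd : ¬ p ∣ ∏ i, (if p ∣ r i then 1 else r i) := by
          rw [Prime.dvd_finset_prod_iff hp.prime]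
          rintro ⟨i, _, hdi⟩
          by_cases hd : p ∣ r i
          · rw [if_pos hd] at hdi
            exact hp.one_lt.ne' (Nat.dvd_one.1 hdi)
          · rw [if_neg hd] at hdi
            exact hd hdi
        obtain ⟨c, hc⟩ := hgpow
        have hHne : (∏ i, (if p ∣ r i then 1 else r i)) ≠ 0 := by
          intro h0
          rw [h0, mul_zero] at hm_eq
          exact hm hm_eq.symm
        have hce : c = e := by
          have : m.factorization p = c := by
            rw [← hm_eq, hc, Nat.factorization_mul (pow_ne_zero c hp.pos.ne') hHne]
            simp [hp.factorization_pow, Nat.factorization_eq_zero_of_not_dvd hHnd]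
          rw [hedef, this]
        rw [hc, hce] at hm_eq
        have hprodH : (∏ i, (if p ∣ r i then 1 else r i)) = m' := by
          have := hmm'
          exact Nat.eq_of_mul_eq_mul_left (pow_pos hp.pos e) (by rw [hm_eq, ← hmm'])
        rw [Finset.mem_coe, Finset.mem_sigma]
        constructor
        · exact Finset.mem_powerset.2 (Finset.filter_subset _ _)
        · rw [Finset.mem_product]
          constructor
          · -- g membership
            refine Finset.mem_filter.2 ⟨?_, ?_⟩
            · refine Fintype.mem_piFinset.2 ?_
              intro i
              dsimp only
              by_cases hiT : i ∈ S.filter (fun i => p ∣ r i)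
              · rw [if_pos hiT]
                have hdi : p ∣ r i := (Finset.mem_filter.1 hiT).2
                rw [if_pos hdi]
                rcases hform i hdi with h | h
                · rw [h]; exact Finset.mem_insert_self _ _
                · rw [h]; exact Finset.mem_insert_of_mem (Finset.mem_singleton_self _)
              · rw [if_neg hiT]
                have hnd : ¬ p ∣ r i := by
                  intro hd
                  exact hiT (Finset.mem_filter.2 ⟨hdS i hd, hd⟩)
                rw [if_neg hnd]
                exact Finset.mem_singleton_self 1
            · show (∏ i, (if p ∣ r i then r i else 1)) = p ^ e
              rw [hc, hce]
          · -- h membership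
            refine Finset.mem_filter.2 ⟨?_, ?_⟩
            · refine Fintype.mem_piFinset.2 ?_
              intro i
              dsimp only
              by_cases hiD : i ∈ S \ (S.filter (fun i => p ∣ r i))
              · rw [if_pos hiD]
                rw [Finset.mem_sdiff] at hiD
                obtain ⟨hiS, hiT⟩ := hiD
                have hnd : ¬ p ∣ r i := fun hd => hiT (Finset.mem_filter.2 ⟨hiS, hd⟩)
                rw [if_neg hnd]
                exact hrQ i hiS
              · rw [if_neg hiD]
                rw [Finset.mem_sdiff] at hiD
                push_neg at hiD
                by_cases hiS : i ∈ S
                · have hiT := hiD hiS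
                  have hdi : p ∣ r i := (Finset.mem_filter.1 hiT).2
                  rw [if_pos hdi]
                  exact Finset.mem_singleton_self 1
                · have hnd : ¬ p ∣ r i := by
                    intro hd
                    exact hiS (hdS i hd)
                  rw [if_neg hnd, hr1 i hiS]
                  exact Finset.mem_singleton_self 1
            · show (∏ i, (if p ∣ r i then 1 else r i)) = m'
              exact hprodH
      · -- injectivity
        intro r hr r' hr' heq
        have hgh : ((fun i => if p ∣ r i then r i else 1), (fun i => if p ∣ r i then 1 else r i))
            = ((fun i => if p ∣ r' i then r' i else 1), (fun i => if p ∣ r' i then 1 else r' i)) :=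
          congrArg Sigma.snd heq
        rw [Prod.ext_iff] at hgh
        obtain ⟨hg, hh⟩ := hgh
        funext i
        have h1 : (if p ∣ r i then r i else 1) = (if p ∣ r' i then r' i else 1) := congrFun hg i
        have h2 : (if p ∣ r i then 1 else r i) = (if p ∣ r' i then 1 else r' i) := congrFun hh i
        have e1 : r i = (if p ∣ r i then r i else 1) * (if p ∣ r i then 1 else r i) := by
          by_cases hd : p ∣ r i <;> simp [hd]
        have e2 : r' i = (if p ∣ r' i then r' i else 1) * (if p ∣ r' i then 1 else r' i) := by
          by_cases hd : p ∣ r' i <;> simp [hd]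
        rw [e1, e2, h1, h2]
    -- Step B
    have hGfacts : ∀ T : Finset ι, ∀ g ∈ GsD p e T,
        (∀ i, i ∉ T → g i = 1) ∧ (∀ i ∈ T, g i = p ∨ g i = p ^ 2) := by
      intro T g hg
      obtain ⟨hgpi, -⟩ := Finset.mem_filter.1 hg
      have hgm := Fintype.mem_piFinset.1 hgpi
      constructor
      · intro i hi
        have := hgm i
        rw [if_neg hi] at this
        simpa using this
      · intro i hi
        have := hgm i
        rw [if_pos hi] at this
        simpa using this
    have hsum : ∀ T : Finset ι, ∀ g ∈ GsD p e T,
        T.card + (T.filter (fun i => g i = p ^ 2)).card = e := by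
      intro T g hg
      obtain ⟨hgpi, hgprod⟩ := Finset.mem_filter.1 hg
      obtain ⟨hg1, hgp⟩ := hGfacts T g hg
      have hT : ∏ i ∈ T, g i = p ^ e := by
        rw [Finset.prod_subset (Finset.subset_univ T) (fun i _ hi => hg1 i hi)]
        exact hgprod
      have hsplit2 := Finset.prod_filter_mul_prod_filter_not T (fun i => g i = p ^ 2) g
      have hUprod : ∏ i ∈ T.filter (fun i => g i = p ^ 2), g i
          = (p ^ 2) ^ (T.filter (fun i => g i = p ^ 2)).card := by
        rw [Finset.prod_congr rfl (fun i hi => (Finset.mem_filter.1 hi).2), Finset.prod_const]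
      have hVprod : ∏ i ∈ T.filter (fun i => ¬ g i = p ^ 2), g i
          = p ^ (T.filter (fun i => ¬ g i = p ^ 2)).card := by
        rw [Finset.prod_congr rfl (fun i hi => ?_), Finset.prod_const]
        have hi' := Finset.mem_filter.1 hi
        rcases hgp i hi'.1 with h | h
        · exact h
        · exact absurd h hi'.2
      rw [hUprod, hVprod, ← pow_mul, ← pow_add, hT] at hsplit2
      have hexp := Nat.pow_right_injective hp.two_le hsplit2
      have hcards := Finset.card_filter_add_card_filter_not
        (s := T) (fun i => g i = p ^ 2)
      clear * - hexp hcards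
      omega
    have stepB : ∀ T : Finset ι,
        (GsD p e T).card ≤ (if e < T.card then 0 else T.card.choose (e - T.card)) := by
      intro T
      by_cases he : e < T.card
      · rw [if_pos he]
        have : GsD p e T = ∅ := by
          apply Finset.eq_empty_of_forall_notMem
          intro g hg
          have := hsum T g hg
          clear * - this he
          omega
        rw [this]
        simp
      · rw [if_neg he]
        rw [← Finset.card_powersetCard (e - T.card) T]
        apply Finset.card_le_card_of_injOn (fun g => T.filter (fun i => g i = p ^ 2))
        · intro g hg
          rw [Finset.mem_coe, Finset.mem_powersetCard]
          beta_reduce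
          refine ⟨Finset.filter_subset _ _, ?_⟩
          have := hsum T g hg
          clear * - this he
          omega
        · intro g hg g' hg' hUeq
          have hUeq' : T.filter (fun i => g i = p ^ 2) = T.filter (fun i => g' i = p ^ 2) := hUeq
          obtain ⟨hg1, hgp⟩ := hGfacts T g hg
          obtain ⟨hg1', hgp'⟩ := hGfacts T g' hg'
          funext i
          by_cases hiT : i ∈ T
          · by_cases hiU : i ∈ T.filter (fun i => g i = p ^ 2)
            · have h1 : g i = p ^ 2 := (Finset.mem_filter.1 hiU).2
              rw [hUeq'] at hiU
              have h2 : g' i = p ^ 2 := (Finset.mem_filter.1 hiU).2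
              rw [h1, h2]
            · have h1 : g i = p := by
                rcases hgp i hiT with h | h
                · exact h
                · exact absurd (Finset.mem_filter.2 ⟨hiT, h⟩) hiU
              rw [hUeq'] at hiU
              have h2 : g' i = p := by
                rcases hgp' i hiT with h | h
                · exact h
                · exact absurd (Finset.mem_filter.2 ⟨hiT, h⟩) hiU
              rw [h1, h2]
          · rw [hg1 i hiT, hg1' i hiT]
    -- Step C : assembly
    calc ((Fintype.piFinset (fun i : ι => if i ∈ S then QS else {1})).filter
        (fun r => ∏ i, r i = m)).card * 3 ^ S.card
        ≤ (∑ T ∈ S.powerset, (GsD p e T).card * (HsD QS m' (S \ T)).card) * 3 ^ S.card :=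
          Nat.mul_le_mul_right _ stepA
      _ = ∑ T ∈ S.powerset, (GsD p e T).card * (HsD QS m' (S \ T)).card * 3 ^ S.card := by
          rw [Finset.sum_mul]
      _ ≤ ∑ T ∈ S.powerset, (if e < T.card then 0 else T.card.choose (e - T.card)) *
            ((S.card - T.card).factorial * 3 ^ Om m') * 3 ^ T.card := by
          apply Finset.sum_le_sum
          intro T hT
          have hTS : T ⊆ S := Finset.mem_powerset.1 hT
          have hcard : (S \ T).card = S.card - T.card := Finset.card_sdiff_of_subset hTS
          have hTle := Finset.card_le_card hTS
          have hps : 3 ^ S.card = 3 ^ ((S \ T).card) * 3 ^ T.card := by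
            rw [← pow_add]
            congr 1
            clear * - hcard hTle
            omega
          rw [hps]
          have hIH : (HsD QS m' (S \ T)).card * 3 ^ (S \ T).card ≤ (S \ T).card.factorial * 3 ^ Om m' :=
            IH m' hm'lt hm'pos.ne' (S \ T)
          calc (GsD p e T).card * (HsD QS m' (S \ T)).card * (3 ^ (S \ T).card * 3 ^ T.card)
              = (GsD p e T).card * ((HsD QS m' (S \ T)).card * 3 ^ (S \ T).card) * 3 ^ T.card := by ring
            _ ≤ (if e < T.card then 0 else T.card.choose (e - T.card)) *
                ((S \ T).card.factorial * 3 ^ Om m') * 3 ^ T.card :=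
                Nat.mul_le_mul (Nat.mul_le_mul (stepB T) hIH) (le_refl _)
            _ = _ := by rw [hcard]
      _ = ∑ j ∈ range (S.card + 1), S.card.choose j *
            ((if e < j then 0 else j.choose (e - j)) *
              ((S.card - j).factorial * 3 ^ j)) * 3 ^ Om m' := by
          rw [Finset.sum_powerset]
          refine Finset.sum_congr rfl fun j hj => ?_
          calc ∑ T ∈ Finset.powersetCard j S,
                (if e < T.card then 0 else T.card.choose (e - T.card)) *
                  ((S.card - T.card).factorial * 3 ^ Om m') * 3 ^ T.card
              = ∑ _T ∈ Finset.powersetCard j S,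
                (if e < j then 0 else j.choose (e - j)) *
                  ((S.card - j).factorial * 3 ^ Om m') * 3 ^ j := by
                refine Finset.sum_congr rfl fun T hT => ?_
                rw [(Finset.mem_powersetCard.1 hT).2]
            _ = (Finset.powersetCard j S).card *
                ((if e < j then 0 else j.choose (e - j)) *
                  ((S.card - j).factorial * 3 ^ Om m') * 3 ^ j) := by
                rw [Finset.sum_const, smul_eq_mul]
            _ = S.card.choose j *
                ((if e < j then 0 else j.choose (e - j)) *
                  ((S.card - j).factorial * 3 ^ j)) * 3 ^ Om m' := by
                rw [Finset.card_powersetCard]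
                ring
      _ = (∑ j ∈ range (S.card + 1), S.card.choose j *
            ((if e < j then 0 else j.choose (e - j)) *
              ((S.card - j).factorial * 3 ^ j))) * 3 ^ Om m' := by
          rw [Finset.sum_mul]
      _ ≤ (S.card.factorial * 3 ^ e) * 3 ^ Om m' :=
          Nat.mul_le_mul_right _ (numeric S.card e he1)
      _ = S.card.factorial * 3 ^ Om m := by
          rw [hOm, pow_add]
          ring

open Classical in
theorem high_moment_combinatorial_bound (x : ℝ) (hx : 2 ≤ x) (k : ℕ) (hk : 1 ≤ k)
    (PS QS : Finset ℕ) (hPS : ∀ p ∈ PS, p.Prime)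
    (hQS : ∀ q ∈ QS, (q ∈ PS) ∨ (∃ p ∈ PS, q = p ^ 2))
    (A : ℕ → ℂ) :
    (∑' m : ℕ,
        ((((m.divisors).filter (fun d => ∀ p : ℕ, p.Prime → p ∣ d → p ∈ PS)).card : ℝ) *
          ‖∑ q ∈ Fintype.piFinset (fun _ : Fin k => QS),
              if (∏ i, q i) = m then ∏ i, A (q i) else 0‖ ^ 2 / m)) ≤
      (Nat.factorial k : ℝ) *
        (2 * ∑ q ∈ QS, (if q.Prime then (1 : ℝ) else 6) * ‖A q‖ ^ 2 / q) ^ k := by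
  classical
  -- basic facts about QS
  have hQS' : ∀ q ∈ QS, q.Prime ∨ ∃ p, p.Prime ∧ q = p ^ 2 := by
    intro q hq
    rcases hQS q hq with h | ⟨p, hp, rfl⟩
    · exact Or.inl (hPS q h)
    · exact Or.inr ⟨p, hPS p hp, rfl⟩
  have hQ2 : ∀ q ∈ QS, 2 ≤ q := by
    intro q hq
    rcases hQS' q hq with h | ⟨p, hp, rfl⟩
    · exact h.two_le
    · nlinarith [hp.two_le]
  set T := Fintype.piFinset (fun _ : Fin k => QS) with hT
  set M := T.image (fun q => ∏ i, q i) with hM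
  set dt : ℕ → ℕ := fun m =>
    ((m.divisors).filter (fun d => ∀ p : ℕ, p.Prime → p ∣ d → p ∈ PS)).card with hdt
  set N : ℕ → ℕ := fun m => (T.filter (fun r => ∏ i, r i = m)).card with hN
  set vq : ℕ → ℕ := fun q => if q.Prime then 1 else 6 with hvq
  have hTmem : ∀ q ∈ T, ∀ i, q i ∈ QS := by
    intro q hq i
    exact Fintype.mem_piFinset.1 hq i
  have hMpos : ∀ m ∈ M, 1 ≤ m := by
    intro m hm
    obtain ⟨q, hq, rfl⟩ := Finset.mem_image.1 hm
    refine Finset.one_le_prod' fun i _ => ?_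
    have := hQ2 _ (hTmem q hq i)
    omega
  -- step 1 : tsum to finite sum
  rw [tsum_eq_sum (s := M) ?_]
  swap
  · intro m hm
    have hz : (∑ q ∈ T, if (∏ i, q i) = m then ∏ i, A (q i) else 0) = 0 := by
      apply Finset.sum_eq_zero
      intro q hq
      rw [if_neg]
      intro hqm
      exact hm (Finset.mem_image.2 ⟨q, hq, hqm⟩)
    rw [hz]
    simp
  -- per-tuple combinatorial bound
  have keybound : ∀ q ∈ T,
      dt (∏ i, q i) * N (∏ i, q i) ≤ k.factorial * ∏ i, (2 * vq (q i)) := by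
    intro q hq
    set m := ∏ i, q i with hm
    have hqne : ∀ i, q i ≠ 0 := fun i => by have := hQ2 _ (hTmem q hq i); omega
    have hmne : m ≠ 0 := by
      rw [hm]
      exact Finset.prod_ne_zero_iff.2 fun i _ => hqne i
    have hOmm : Om m = ∑ i, Om (q i) := Om_prod univ q (fun i _ => hqne i)
    -- key_count with S = univ
    have huniv : (fun i : Fin k => if i ∈ (Finset.univ : Finset (Fin k)) then QS else {1})
        = fun _ : Fin k => QS := by
      funext i
      rw [if_pos (Finset.mem_univ i)]
    have hkc := key_count QS hQS' m hmne (Finset.univ : Finset (Fin k))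
    rw [huniv] at hkc
    rw [Finset.card_univ, Fintype.card_fin] at hkc
    -- hkc : N m * 3 ^ k ≤ k! * 3 ^ Om m
    have hdt : dt m ≤ 2 ^ Om m := le_trans (Finset.card_filter_le _ _) (tau_le_two_pow hmne)
    have hper : ∀ i : Fin k, 2 ^ Om (q i) * 3 ^ Om (q i) ≤ 2 * vq (q i) * 3 := by
      intro i
      rcases hQS' _ (hTmem q hq i) with hp | ⟨p, hp, hqi⟩
      · rw [Om_prime hp, hvq]
        simp [hp]
      · rw [hqi, Om_pow hp]
        have hnp : ¬ (p ^ 2).Prime := Nat.Prime.not_prime_pow (le_refl 2)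
        rw [hvq]
        simp only [hnp, if_false]
        norm_num
    have hprod : 2 ^ Om m * 3 ^ Om m ≤ (∏ i, (2 * vq (q i))) * 3 ^ k := by
      calc 2 ^ Om m * 3 ^ Om m
          = ∏ i : Fin k, (2 ^ Om (q i) * 3 ^ Om (q i)) := by
            rw [Finset.prod_mul_distrib, Finset.prod_pow_eq_pow_sum, Finset.prod_pow_eq_pow_sum,
              ← hOmm]
        _ ≤ ∏ i : Fin k, (2 * vq (q i) * 3) := Finset.prod_le_prod' (fun i _ => hper i)
        _ = (∏ i, (2 * vq (q i))) * 3 ^ k := by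
            rw [Finset.prod_mul_distrib, Finset.prod_const, Finset.card_univ, Fintype.card_fin]
    have h3k : 0 < 3 ^ k := Nat.pow_pos (by norm_num)
    apply Nat.le_of_mul_le_mul_right ?_ h3k
    calc dt m * N m * 3 ^ k = dt m * (N m * 3 ^ k) := by ring
      _ ≤ 2 ^ Om m * (k.factorial * 3 ^ Om m) :=
          Nat.mul_le_mul hdt hkc
      _ = k.factorial * (2 ^ Om m * 3 ^ Om m) := by ring
      _ ≤ k.factorial * ((∏ i, (2 * vq (q i))) * 3 ^ k) :=
          Nat.mul_le_mul_left _ hprod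
      _ = k.factorial * (∏ i, (2 * vq (q i))) * 3 ^ k := by ring
  -- step 2 : per-m Cauchy-Schwarz
  have stepCS : ∀ m ∈ M,
      (dt m : ℝ) * ‖∑ q ∈ T, if (∏ i, q i) = m then ∏ i, A (q i) else 0‖ ^ 2 / m
        ≤ (dt m : ℝ) * ((N m : ℝ) *
            ∑ r ∈ T.filter (fun r => ∏ i, r i = m), ∏ i, ‖A (r i)‖ ^ 2) / m := by
    intro m hm
    have hm1 := hMpos m hm
    have hmR : (0:ℝ) < m := by exact_mod_cast hm1
    have hsumf : (∑ q ∈ T, if (∏ i, q i) = m then ∏ i, A (q i) else 0)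
        = ∑ r ∈ T.filter (fun r => ∏ i, r i = m), ∏ i, A (r i) :=
      (Finset.sum_filter _ _).symm
    rw [hsumf]
    have hnorm : ‖∑ r ∈ T.filter (fun r => ∏ i, r i = m), ∏ i, A (r i)‖ ^ 2
        ≤ (N m : ℝ) * ∑ r ∈ T.filter (fun r => ∏ i, r i = m), ∏ i, ‖A (r i)‖ ^ 2 := by
      have h1 : ‖∑ r ∈ T.filter (fun r => ∏ i, r i = m), ∏ i, A (r i)‖
          ≤ ∑ r ∈ T.filter (fun r => ∏ i, r i = m), ‖∏ i, A (r i)‖ := norm_sum_le _ _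
      have h2 : ‖∑ r ∈ T.filter (fun r => ∏ i, r i = m), ∏ i, A (r i)‖ ^ 2
          ≤ (∑ r ∈ T.filter (fun r => ∏ i, r i = m), ‖∏ i, A (r i)‖) ^ 2 :=
        pow_le_pow_left₀ (norm_nonneg _) h1 2
      have h3 := Finset.sum_mul_sq_le_sq_mul_sq (T.filter (fun r => ∏ i, r i = m))
        (fun _ => (1:ℝ)) (fun r => ‖∏ i, A (r i)‖)
      simp only [one_mul, one_pow] at h3
      have hprodeq : ∀ r : Fin k → ℕ, ‖∏ i, A (r i)‖ ^ 2 = ∏ i, ‖A (r i)‖ ^ 2 := by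
        intro r
        rw [norm_prod, ← Finset.prod_pow]
      calc ‖∑ r ∈ T.filter (fun r => ∏ i, r i = m), ∏ i, A (r i)‖ ^ 2
          ≤ (∑ r ∈ T.filter (fun r => ∏ i, r i = m), ‖∏ i, A (r i)‖) ^ 2 := h2
        _ ≤ ((T.filter (fun r => ∏ i, r i = m)).card : ℝ) *
              ∑ r ∈ T.filter (fun r => ∏ i, r i = m), ‖∏ i, A (r i)‖ ^ 2 := by
            simpa using h3
        _ = (N m : ℝ) * ∑ r ∈ T.filter (fun r => ∏ i, r i = m), ∏ i, ‖A (r i)‖ ^ 2 := by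
            rw [Finset.sum_congr rfl (fun r _ => hprodeq r)]
    gcongr
  -- main chain
  calc ∑ m ∈ M, (dt m : ℝ) *
        ‖∑ q ∈ T, if (∏ i, q i) = m then ∏ i, A (q i) else 0‖ ^ 2 / m
      ≤ ∑ m ∈ M, (dt m : ℝ) * ((N m : ℝ) *
          ∑ r ∈ T.filter (fun r => ∏ i, r i = m), ∏ i, ‖A (r i)‖ ^ 2) / m :=
        Finset.sum_le_sum stepCS
    _ = ∑ m ∈ M, ∑ r ∈ T.filter (fun r => ∏ i, r i = m),
          (dt (∏ i, r i) : ℝ) * (N (∏ i, r i) : ℝ) * (∏ i, ‖A (r i)‖ ^ 2) / (∏ i, r i) := by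
        refine Finset.sum_congr rfl fun m hm => ?_
        rw [Finset.mul_sum, Finset.mul_sum, Finset.sum_div]
        refine Finset.sum_congr rfl fun r hr => ?_
        have hrm : (∏ i, r i) = m := (Finset.mem_filter.1 hr).2
        rw [hrm]
        ring
    _ = ∑ r ∈ T, (dt (∏ i, r i) : ℝ) * (N (∏ i, r i) : ℝ) *
          (∏ i, ‖A (r i)‖ ^ 2) / (∏ i, r i) :=
        Finset.sum_fiberwise_of_maps_to
          (fun r hr => Finset.mem_image_of_mem _ hr) _
    _ ≤ ∑ r ∈ T, (k.factorial : ℝ) * ∏ i, ((2 * (vq (r i) : ℝ)) * ‖A (r i)‖ ^ 2 / (r i)) := by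
        refine Finset.sum_le_sum fun r hr => ?_
        have hrne : ∀ i, (0:ℝ) < (r i : ℝ) := fun i => by
          have := hQ2 _ (hTmem r hr i)
          have : (2:ℝ) ≤ (r i : ℝ) := by exact_mod_cast this
          linarith
        have hcast : ((dt (∏ i, r i) : ℝ) * (N (∏ i, r i) : ℝ))
            ≤ (k.factorial : ℝ) * ∏ i, (2 * (vq (r i) : ℝ)) := by
          have := keybound r hr
          have h2 : ((dt (∏ i, r i) * N (∏ i, r i) : ℕ) : ℝ)
              ≤ ((k.factorial * ∏ i, (2 * vq (r i)) : ℕ) : ℝ) := Nat.cast_le.2 this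
          simp only [Nat.cast_mul, Nat.cast_prod, Nat.cast_ofNat] at h2
          exact h2
        have hWm : (0:ℝ) ≤ (∏ i, ‖A (r i)‖ ^ 2) / (∏ i, r i : ℕ) := by positivity
        calc (dt (∏ i, r i) : ℝ) * (N (∏ i, r i) : ℝ) * (∏ i, ‖A (r i)‖ ^ 2) / (∏ i, r i)
            = ((dt (∏ i, r i) : ℝ) * (N (∏ i, r i) : ℝ)) *
                ((∏ i, ‖A (r i)‖ ^ 2) / ((∏ i, r i : ℕ) : ℝ)) := by ring
          _ ≤ ((k.factorial : ℝ) * ∏ i, (2 * (vq (r i) : ℝ))) *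
                ((∏ i, ‖A (r i)‖ ^ 2) / ((∏ i, r i : ℕ) : ℝ)) :=
              mul_le_mul_of_nonneg_right hcast hWm
          _ = (k.factorial : ℝ) * ∏ i, ((2 * (vq (r i) : ℝ)) * ‖A (r i)‖ ^ 2 / (r i)) := by
              rw [Finset.prod_div_distrib, Finset.prod_mul_distrib, Finset.prod_mul_distrib,
                Nat.cast_prod]
              rw [Finset.prod_mul_distrib]
              ring
    _ = (k.factorial : ℝ) *
          (∑ q ∈ QS, (2 * (vq q : ℝ)) * ‖A q‖ ^ 2 / q) ^ k := by
        rw [← Finset.mul_sum]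
        congr 1
        have := Finset.prod_univ_sum (fun _ : Fin k => QS)
          (fun _ q => (2 * (vq q : ℝ)) * ‖A q‖ ^ 2 / q)
        rw [← this, Finset.prod_const, Finset.card_univ, Fintype.card_fin]
    _ = (k.factorial : ℝ) *
          (2 * ∑ q ∈ QS, (if q.Prime then (1:ℝ) else 6) * ‖A q‖ ^ 2 / q) ^ k := by
        congr 2
        rw [Finset.mul_sum]
        refine Finset.sum_congr rfl fun q hq => ?_
        have : (vq q : ℝ) = if q.Prime then (1:ℝ) else 6 := by
          rw [hvq]
          by_cases h : q.Prime <;> simp [h]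
        rw [this]
        ring
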